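/- Lemma 3, almost-sure consistency at the true causal parameter: assume the effect model at the true parameter, i.e. Y i true = h i (Y i false) for every unit i, and Assumption 3 (fixed missingness indicators M : I → Bool). Define the transformed outcomes W z i := (if arm z i then Y i (arm z i) else h i (Y i (arm z i))) and transformed realized outcomes Wstar z i := (if M i then none else some (W z i)). Let G : Ω → (I → Option ℝ) → (I → ℝ) be a deterministic imputation algorithm, H : (I → ℝ) → (I → ℝ) a deterministic covariate-adjustment model, res z ystar := fun i => G z ystar i - H (G z ystar) i, T : Ω → (I → ℝ) → ℝ a test statistic, z₀ ∈ Ω the observed assignment, t_β := T z₀ (res z₀ (Wstar z₀)), and p_β := (𝒫.toMeasure {z | T z (res z (Wstar z)) ≥ t_β}).toReal. For L ≥ 1 define p̂ L := (1/L) * ∑_{l=0}^{L-1} indicator {ω | T (Z l ω) (res (Z l ω) (Wstar z₀)) ≥ t_β}. Then p̂ L converges to p_β μ-almost surely as L → ∞. -/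

import Mathlib

open MeasureTheory ProbabilityTheory Filter

/-- Lemma 3, almost-sure consistency at the true causal parameter. -/
theorem lemma3_as_consistency_true_parameter
    {Ω : Type*} [Fintype Ω] [Nonempty Ω] [MeasurableSpace Ω] [MeasurableSingletonClass Ω]
    {I : Type*} [Fintype I]
    {Ω' : Type*} [MeasurableSpace Ω'] (μ : Measure Ω') [IsProbabilityMeasure μ]
    (P : PMF Ω)                   -- randomization distribution (Assumption 1)
    (arm : Ω → I → Bool)          -- treatment arm of each unit under each assignment
    (Y : I → Bool → ℝ)            -- fixed potential outcomes
    (h : I → ℝ → ℝ)               -- effect model at the true causal parameter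
    (hmodel : ∀ i, Y i true = h i (Y i false))
    (M : I → Bool)                -- fixed missingness indicators (Assumption 3)
    (W : Ω → I → ℝ)               -- transformed outcomes
    (hW : ∀ (z : Ω) (i : I),
      W z i = if arm z i then Y i (arm z i) else h i (Y i (arm z i)))
    (Wstar : Ω → I → Option ℝ)    -- transformed realized outcomes
    (hWstar : ∀ (z : Ω) (i : I), Wstar z i = if M i then none else some (W z i))
    (G : Ω → (I → Option ℝ) → (I → ℝ))    -- deterministic imputation algorithm
    (H : (I → ℝ) → (I → ℝ))               -- deterministic covariate-adjustment model
    (res : Ω → (I → Option ℝ) → (I → ℝ))  -- residual vector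
    (hres : ∀ z ystar i, res z ystar i = G z ystar i - H (G z ystar) i)
    (T : Ω → (I → ℝ) → ℝ)                 -- test statistic
    (z₀ : Ω)                              -- observed assignment
    (Z : ℕ → Ω' → Ω)                      -- Monte Carlo re-randomization draws
    (hZmeas : ∀ l, Measurable (Z l))
    (hZlaw : ∀ l, μ.map (Z l) = P.toMeasure)             -- identically distributed with law P
    (hZindep : iIndepFun Z μ)   -- independent
    (tβ : ℝ) (htβ : tβ = T z₀ (res z₀ (Wstar z₀)))       -- observed statistic value
    (pβ : ℝ)
    (hpβ : pβ = (P.toMeasure {z | T z (res z (Wstar z)) ≥ tβ}).toReal)  -- exact p-value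
    (phat : ℕ → Ω' → ℝ)
    (hphat : ∀ L ω, phat L ω =
      (1 / (L : ℝ)) * ∑ l ∈ Finset.range L,
        (if T (Z l ω) (res (Z l ω) (Wstar z₀)) ≥ tβ then (1 : ℝ) else 0)) :
    ∀ᵐ ω ∂μ, Tendsto (fun L => phat L ω) atTop (nhds pβ) := by
  -- W z i = Y i true for all z
  have hWconst : ∀ z, Wstar z = Wstar z₀ := by
    intro z
    funext i
    have hWv : ∀ z', W z' i = Y i true := by
      intro z'
      rw [hW]
      cases harm : arm z' i with
      | true => simp
      | false => simp [hmodel i]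
    rw [hWstar, hWstar, hWv, hWv]
  set S : Set Ω := {z | T z (res z (Wstar z₀)) ≥ tβ} with hS
  have hSmeas : MeasurableSet S := S.toFinite.measurableSet
  set f : Ω → ℝ := S.indicator (fun _ => (1 : ℝ)) with hf
  have hfmeas : Measurable f := (measurable_const (a := (1:ℝ))).indicator hSmeas
  set X : ℕ → Ω' → ℝ := fun l ω => f (Z l ω) with hX
  have hXmeas : ∀ l, Measurable (X l) := fun l => hfmeas.comp (hZmeas l)
  have hmap : ∀ l, μ.map (X l) = (P.toMeasure).map f := by
    intro l
    show μ.map (f ∘ Z l) = _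
    rw [← Measure.map_map hfmeas (hZmeas l), hZlaw l]
  have hident : ∀ l, IdentDistrib (X l) (X 0) μ μ :=
    fun l => ⟨(hXmeas l).aemeasurable, (hXmeas 0).aemeasurable,
      (hmap l).trans (hmap 0).symm⟩
  have hindep : Pairwise (Function.onFun (IndepFun · · μ) X) := by
    intro i j hij
    exact (hZindep.indepFun hij).comp hfmeas hfmeas
  have hint : Integrable (X 0) μ := by
    have : ∀ ω, ‖X 0 ω‖ ≤ 1 := by
      intro ω
      simp only [hX, hf, Set.indicator]
      split <;> simp
    exact (integrable_const (1:ℝ)).mono' (hXmeas 0).aestronglyMeasurable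
      (Filter.Eventually.of_forall this)
  have hSLLN := strong_law_ae_real X hint hindep hident
  have hmean : μ[X 0] = pβ := by
    rw [← integral_map (hZmeas 0).aemeasurable hfmeas.aestronglyMeasurable, hZlaw 0]
    rw [hf, integral_indicator_const _ hSmeas]
    simp only [smul_eq_mul, mul_one]
    rw [hpβ]
    congr 2
    ext z
    simp [hS, hWconst z]
  rw [hmean] at hSLLN
  filter_upwards [hSLLN] with ω hω
  have heq : ∀ L, phat L ω = (∑ l ∈ Finset.range L, X l ω) / L := by
    intro L
    rw [hphat, one_div, inv_mul_eq_div]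
    have : ∀ l, (if T (Z l ω) (res (Z l ω) (Wstar z₀)) ≥ tβ then (1:ℝ) else 0) = X l ω := by
      intro l
      simp only [hX, hf, Set.indicator, hS, Set.mem_setOf_eq]
    simp_rw [this]
  simpa only [heq] using hω
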